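/- Let 0 ≤ α < 1/2, N a positive integer, h = 2π/(2N+1), and let x̃_{−N},…,x̃_N be a set of α-perturbed nodes. Fix −N ≤ j ≤ N and for −N ≤ k ≤ N set x_k = x̃_j + (k−j)h, and let d(j,k) = min{|j−k|, 2N+1−|j−k|}. Then for every k ≠ j, |∏_{m=−N, m≠j,k}^{N} sin((x_k − x̃_m)/2) / ∏_{m=−N, m≠j}^{N} sin((x̃_j − x̃_m)/2)| ≤ (1/sin(d(j,k)h/2)) · ∏_{m=1}^{N} [sin²((mh + αh)/2) / (sin((mh − 2αh)/2) sin(mh/2))]. -/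
import Mathlib

open Real Finset

/-- `x` is a set of α-perturbed nodes of size 2N+1. -/
def PerturbedNodes (N : ℕ) (α : ℝ) (x : ℤ → ℝ) : Prop :=
  ∀ j ∈ Finset.Icc (-(N:ℤ)) (N:ℤ),
    |x j - (j : ℝ) * (2*π/(2*N+1))| ≤ α * (2*π/(2*N+1))

/- ## Auxiliary analytic lemmas -/

lemma aux_sinsq (x y : ℝ) : Real.sin x * Real.sin y ≤ Real.sin ((x+y)/2)^2 := by
  have h1 := Real.cos_le_one (x - y)
  have h2 := Real.cos_sub_cos (x-y) (x+y)
  have h3 := Real.cos_sub_cos 0 (x+y)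
  simp [Real.sin_neg] at h2 h3
  rw [show (x - y - (x + y)) / 2 = -y by ring] at h2
  rw [show (-y + -x)/2 = -((x+y)/2) by ring] at h3
  simp [Real.sin_neg] at h2 h3
  nlinarith

lemma aux_sinmono {A B : ℝ} (hB : 0 ≤ B) (hBA : B ≤ A) (hA : A ≤ π - B) :
    Real.sin B ≤ Real.sin A := by
  have h := Real.sin_sub_sin A B
  have hc : 0 ≤ Real.cos ((A+B)/2) := by
    apply Real.cos_nonneg_of_mem_Icc
    constructor <;> [linarith [Real.pi_pos]; linarith]
  have hs : 0 ≤ Real.sin ((A-B)/2) := by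
    apply Real.sin_nonneg_of_nonneg_of_le_pi <;> linarith [Real.pi_pos]
  nlinarith

lemma aux_sin_nn {A : ℝ} (h0 : 0 ≤ A) (h1 : A ≤ π) : 0 ≤ Real.sin A :=
  Real.sin_nonneg_of_nonneg_of_le_pi h0 h1

lemma aux_pair_upper {D a b c : ℝ} (ha0 : 0 ≤ D + a) (ha1 : D + a ≤ π)
    (hb0 : 0 ≤ D + b) (hb1 : D + b ≤ π) (hab : a + b ≤ 2*c) (hc : D + c ≤ π/2) :
    Real.sin (D+a) * Real.sin (D+b) ≤ Real.sin (D+c)^2 := by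
  have h1 := aux_sinsq (D+a) (D+b)
  rw [show (D+a+(D+b))/2 = D + (a+b)/2 by ring] at h1
  have hB0 : 0 ≤ D + (a+b)/2 := by linarith
  have h2 : Real.sin (D + (a+b)/2) ≤ Real.sin (D+c) :=
    aux_sinmono hB0 (by linarith) (by linarith [Real.pi_pos])
  have h3 : 0 ≤ Real.sin (D + (a+b)/2) := aux_sin_nn hB0 (by linarith [Real.pi_pos])
  nlinarith

lemma aux_pair_lower {D a b β : ℝ} (hβ0 : 0 ≤ β) (hβD : β ≤ D) (hD : D ≤ π/2)
    (h2D : 2*D + β ≤ π) (ha : |a| ≤ β) (hb : |b| ≤ β) (hs : |a+b| ≤ β) :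
    Real.sin (D-β) * Real.sin D ≤ Real.sin (D+a) * Real.sin (D+b) := by
  have hpi := Real.pi_pos
  obtain ⟨ha1, ha2⟩ := abs_le.mp ha
  obtain ⟨hb1, hb2⟩ := abs_le.mp hb
  obtain ⟨hs1, hs2⟩ := abs_le.mp hs
  have habs : |a-b| ≤ 2*β - |a+b| := by
    rcases abs_cases (a-b) with ⟨h,_⟩|⟨h,_⟩ <;> rcases abs_cases (a+b) with ⟨h',_⟩|⟨h',_⟩ <;>
      linarith
  have hcos : Real.cos (2*β - |a+b|) ≤ Real.cos (a-b) := by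
    rw [← Real.cos_abs (a-b)]
    apply Real.cos_le_cos_of_nonneg_of_le_pi (abs_nonneg _)
      (by linarith [abs_nonneg (a+b)]) habs
  have hid1 : Real.sin (D+a) * Real.sin (D+b)
      = (Real.cos (a-b) - Real.cos (2*D+(a+b)))/2 := by
    have := Real.cos_sub_cos (a-b) (2*D+(a+b))
    rw [show (a-b+(2*D+(a+b)))/2 = D+a by ring,
      show (a-b-(2*D+(a+b)))/2 = -(D+b) by ring, Real.sin_neg] at this
    linarith
  have hid2 : Real.sin (D-β) * Real.sin D = (Real.cos β - Real.cos (2*D-β))/2 := by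
    have := Real.cos_sub_cos β (2*D-β)
    rw [show (β+(2*D-β))/2 = D by ring, show (β-(2*D-β))/2 = -(D-β) by ring,
      Real.sin_neg] at this
    linarith
  rw [hid1, hid2]
  rcases le_or_gt 0 (a+b) with hpos | hneg
  · rw [abs_of_nonneg hpos] at hcos
    have hid3 : Real.cos (2*β - (a+b)) - Real.cos (2*D+(a+b))
        = 2 * (Real.sin (D+β) * Real.sin (D+(a+b)-β)) := by
      have := Real.cos_sub_cos (2*β-(a+b)) (2*D+(a+b))
      rw [show (2*β-(a+b)+(2*D+(a+b)))/2 = D+β by ring,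
        show (2*β-(a+b)-(2*D+(a+b)))/2 = -(D+(a+b)-β) by ring, Real.sin_neg] at this
      linarith
    have m1 : Real.sin D ≤ Real.sin (D+β) := aux_sinmono (by linarith) (by linarith) (by linarith)
    have m2 : Real.sin (D-β) ≤ Real.sin (D+(a+b)-β) :=
      aux_sinmono (by linarith) (by linarith) (by linarith)
    have n1 : 0 ≤ Real.sin D := aux_sin_nn (by linarith) (by linarith)
    have n2 : 0 ≤ Real.sin (D-β) := aux_sin_nn (by linarith) (by linarith)
    nlinarith [mul_le_mul m1 m2 n2 (aux_sin_nn (by linarith : (0:ℝ) ≤ D+β) (by linarith))]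
  · rw [abs_of_neg hneg, show 2*β - -(a+b) = 2*β+(a+b) by ring] at hcos
    have hid3 : Real.cos (2*β + (a+b)) - Real.cos (2*D+(a+b))
        = 2 * (Real.sin (D+β+(a+b)) * Real.sin (D-β)) := by
      have := Real.cos_sub_cos (2*β+(a+b)) (2*D+(a+b))
      rw [show (2*β+(a+b)+(2*D+(a+b)))/2 = D+β+(a+b) by ring,
        show (2*β+(a+b)-(2*D+(a+b)))/2 = -(D-β) by ring, Real.sin_neg] at this
      linarith
    have m1 : Real.sin D ≤ Real.sin (D+β+(a+b)) :=
      aux_sinmono (by linarith) (by linarith) (by linarith)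
    have n2 : 0 ≤ Real.sin (D-β) := aux_sin_nn (by linarith) (by linarith)
    nlinarith [mul_le_mul_of_nonneg_right m1 n2, hcos, hid3]

/- ## Combinatorial infrastructure -/

def wrapI (N : ℕ) (z : ℤ) : ℤ := (z + N) % (2*N+1) - N

lemma wrap_mem (N : ℕ) (z : ℤ) : wrapI N z ∈ Finset.Icc (-(N:ℤ)) (N:ℤ) := by
  have h1 : (0:ℤ) ≤ (z + N) % (2*N+1) := Int.emod_nonneg _ (by positivity)
  have h2 : (z + N) % (2*N+1) < 2*N+1 := Int.emod_lt_of_pos _ (by positivity)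
  simp only [Finset.mem_Icc, wrapI]; omega

lemma wrap_dvd (N : ℕ) (z : ℤ) : (2*(N:ℤ)+1) ∣ (z - wrapI N z) := by
  have h := Int.emod_add_mul_ediv (z + N) (2*N+1)
  refine ⟨(z + N) / (2*N+1), ?_⟩
  simp only [wrapI]
  omega

lemma eqS {N : ℕ} {a b : ℤ} (ha : a ∈ Finset.Icc (-(N:ℤ)) (N:ℤ))
    (hb : b ∈ Finset.Icc (-(N:ℤ)) (N:ℤ)) (h : (2*(N:ℤ)+1) ∣ (a - b)) : a = b := by
  simp only [Finset.mem_Icc] at ha hb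
  obtain ⟨q, hq⟩ := h
  have hq0 : q = 0 := by nlinarith [sq_nonneg q, sq_nonneg (q-1), sq_nonneg (q+1)]
  rw [hq0, mul_zero] at hq
  omega

lemma wrap_invol {N : ℕ} {c m : ℤ} (hc : c ∈ Finset.Icc (-(N:ℤ)) (N:ℤ))
    (hm : m ∈ Finset.Icc (-(N:ℤ)) (N:ℤ)) : wrapI N (c - wrapI N (c - m)) = m := by
  apply eqS (wrap_mem N _) hm
  obtain ⟨q1, h1⟩ := wrap_dvd N (c - m)
  obtain ⟨q2, h2⟩ := wrap_dvd N (c - wrapI N (c - m))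
  exact ⟨q1 - q2, by linear_combination h1 - h2⟩

lemma wrap_self {N : ℕ} {z : ℤ} (hz : z ∈ Finset.Icc (-(N:ℤ)) (N:ℤ)) : wrapI N z = z :=
  (eqS hz (wrap_mem N z) (wrap_dvd N z)).symm

lemma prod_reindex {N : ℕ} (f : ℤ → ℝ) {c : ℤ} (hc : c ∈ Finset.Icc (-(N:ℤ)) (N:ℤ)) :
    ∏ m ∈ (Finset.Icc (-(N:ℤ)) (N:ℤ)).erase c, f m
      = ∏ w ∈ (Finset.Icc (-(N:ℤ)) (N:ℤ)).erase 0, f (wrapI N (c - w)) := by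
  apply Finset.prod_nbij' (i := fun m => wrapI N (c - m)) (j := fun w => wrapI N (c - w))
  · intro m hm
    rw [Finset.mem_erase] at hm ⊢
    refine ⟨fun h0 => hm.1 ?_, wrap_mem N _⟩
    have h1 := wrap_invol hc hm.2
    rw [h0, sub_zero] at h1
    rw [← h1, wrap_self hc]
  · intro w hw
    rw [Finset.mem_erase] at hw ⊢
    refine ⟨fun h0 => hw.1 ?_, wrap_mem N _⟩
    have hinv := wrap_invol hc hw.2
    rw [h0, sub_self] at hinv
    have h00 : wrapI N (0:ℤ) = 0 := wrap_self (by simp)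
    omega
  · intro m hm; exact wrap_invol hc (Finset.mem_of_mem_erase hm)
  · intro w hw; exact wrap_invol hc (Finset.mem_of_mem_erase hw)
  · intro m hm; rw [wrap_invol hc (Finset.mem_of_mem_erase hm)]

lemma prod_reindex2 {N : ℕ} (f : ℤ → ℝ) {c p : ℤ} (hc : c ∈ Finset.Icc (-(N:ℤ)) (N:ℤ))
    (hp : p ∈ Finset.Icc (-(N:ℤ)) (N:ℤ)) :
    ∏ m ∈ ((Finset.Icc (-(N:ℤ)) (N:ℤ)).erase p).erase c, f m
      = ∏ w ∈ ((Finset.Icc (-(N:ℤ)) (N:ℤ)).erase 0).erase (wrapI N (c - p)),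
          f (wrapI N (c - w)) := by
  apply Finset.prod_nbij' (i := fun m => wrapI N (c - m)) (j := fun w => wrapI N (c - w))
  · intro m hm
    rw [Finset.mem_erase] at hm ⊢
    obtain ⟨hmc, hm2⟩ := hm
    rw [Finset.mem_erase] at hm2 ⊢
    obtain ⟨hmp, hmS⟩ := hm2
    refine ⟨fun h0 => hmp ?_, fun h0 => hmc ?_, wrap_mem N _⟩
    · have h1 := wrap_invol hc hmS
      have h2 := wrap_invol hc hp
      rw [h0] at h1; omega
    · have h1 := wrap_invol hc hmS
      rw [h0, sub_zero] at h1
      rw [← h1, wrap_self hc]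
  · intro w hw
    rw [Finset.mem_erase] at hw ⊢
    obtain ⟨hwD, hw2⟩ := hw
    rw [Finset.mem_erase] at hw2 ⊢
    obtain ⟨hw0, hwS⟩ := hw2
    have hinv := wrap_invol hc hwS
    refine ⟨fun h0 => hw0 ?_, fun h0 => hwD ?_, wrap_mem N _⟩
    · rw [h0, sub_self] at hinv
      have h00 : wrapI N (0:ℤ) = 0 := wrap_self (by simp)
      omega
    · rw [h0] at hinv; omega
  · intro m hm
    exact wrap_invol hc (Finset.mem_of_mem_erase (Finset.mem_of_mem_erase hm))
  · intro w hw
    exact wrap_invol hc (Finset.mem_of_mem_erase (Finset.mem_of_mem_erase hw))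
  · intro m hm; rw [wrap_invol hc (Finset.mem_of_mem_erase (Finset.mem_of_mem_erase hm))]

lemma pair_split {N : ℕ} (F : ℤ → ℝ) :
    ∏ w ∈ (Finset.Icc (-(N:ℤ)) (N:ℤ)).erase 0, F w
      = ∏ d ∈ Finset.Icc (1:ℤ) N, (F d * F (-d)) := by
  have hsplit : (Finset.Icc (-(N:ℤ)) (N:ℤ)).erase 0
      = Finset.Icc (1:ℤ) N ∪ Finset.Icc (-(N:ℤ)) (-1) := by
    ext z; simp only [Finset.mem_erase, Finset.mem_Icc, Finset.mem_union]; omega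
  rw [hsplit, Finset.prod_union (by
    rw [Finset.disjoint_left]; intro z hz hz'
    simp only [Finset.mem_Icc] at hz hz'; omega)]
  rw [Finset.prod_mul_distrib]
  congr 1
  apply Finset.prod_nbij' (i := fun d => -d) (j := fun w => -w)
  · intro d hd; simp only [Finset.mem_Icc] at hd ⊢; omega
  · intro w hw; simp only [Finset.mem_Icc] at hw ⊢; omega
  · intro d _; ring
  · intro w _; ring
  · intro d _; rw [neg_neg]

lemma prod_nat_int (G : ℤ → ℝ) (N : ℕ) :
    ∏ d ∈ Finset.Icc (1:ℤ) N, G d = ∏ m ∈ Finset.Icc (1:ℕ) N, G m := by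
  refine Finset.prod_nbij' (fun d => d.toNat) (fun m => (m:ℤ)) ?_ ?_ ?_ ?_ ?_
  · intro d hd; simp only [Finset.mem_Icc] at hd ⊢; omega
  · intro m hm; simp only [Finset.mem_Icc] at hm ⊢; omega
  · intro d hd; simp only [Finset.mem_Icc] at hd
    simpa using Int.toNat_of_nonneg (by omega : (0:ℤ) ≤ d)
  · intro m hm; simp
  · intro d hd; simp only [Finset.mem_Icc] at hd
    rw [Int.toNat_of_nonneg (by omega)]

lemma abs_sin_period (x : ℝ) (q : ℤ) : |Real.sin (x + q*π)| = |Real.sin x| := by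
  rw [Real.sin_add_int_mul_pi, abs_mul]
  rcases Int.even_or_odd q with hq | hq
  · rw [hq.neg_one_zpow]; simp
  · rw [Odd.neg_one_zpow hq]; simp

lemma dmin_eq {N : ℕ} {j k : ℤ} (hj : j ∈ Finset.Icc (-(N:ℤ)) (N:ℤ))
    (hk : k ∈ Finset.Icc (-(N:ℤ)) (N:ℤ)) :
    min |j - k| (2*(N:ℤ)+1 - |j - k|) = |wrapI N (k - j)| := by
  obtain ⟨q, hq⟩ := wrap_dvd N (k - j)
  have hw := wrap_mem N (k - j)
  simp only [Finset.mem_Icc] at hj hk hw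
  obtain ⟨hq1, hq2⟩ : -1 ≤ q ∧ q ≤ 1 := by
    constructor <;> by_contra hcon <;> push_neg at hcon <;>
      nlinarith [hw.1, hw.2, hj.1, hj.2, hk.1, hk.2]
  interval_cases q <;> simp only [Int.abs_eq_natAbs] at * <;> omega

/- ## Per-pair bounds in context -/

lemma pairA_bound {N : ℕ} {α t a b d : ℝ} (ht : 0 < t) (hα0 : 0 ≤ α) (hα : α < 1/2)
    (hMt : (2*(N:ℝ)+1)*t = π) (hd1 : 1 ≤ d) (hdN : d ≤ N)
    (ha : |a| ≤ 2*α*t) (hb : |b| ≤ 2*α*t) (hab : |a+b| ≤ 2*α*t) :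
    |Real.sin (d*t+a)| * |Real.sin (d*t+b)| ≤ Real.sin ((d+α)*t)^2 := by
  obtain ⟨ha1, ha2⟩ := abs_le.mp ha
  obtain ⟨hb1, hb2⟩ := abs_le.mp hb
  obtain ⟨hs1, hs2⟩ := abs_le.mp hab
  have hNd : d ≤ (N:ℝ) := hdN
  have h0a : 0 ≤ d*t + a := by nlinarith
  have h1a : d*t + a ≤ π := by nlinarith
  have h0b : 0 ≤ d*t + b := by nlinarith
  have h1b : d*t + b ≤ π := by nlinarith
  rw [abs_of_nonneg (aux_sin_nn h0a h1a), abs_of_nonneg (aux_sin_nn h0b h1b)]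
  have := aux_pair_upper (c := α*t) h0a h1a h0b h1b (by nlinarith) (by nlinarith)
  rw [show d*t + α*t = (d+α)*t by ring] at this
  exact this

lemma pairB_bound {N : ℕ} {α t a b d : ℝ} (ht : 0 < t) (hα0 : 0 ≤ α) (hα : α < 1/2)
    (hMt : (2*(N:ℝ)+1)*t = π) (hd1 : 1 ≤ d) (hdN : d ≤ N)
    (ha : |a| ≤ 2*α*t) (hb : |b| ≤ 2*α*t) (hab : |a+b| ≤ 2*α*t) :
    Real.sin ((d-2*α)*t) * Real.sin (d*t) ≤ |Real.sin (d*t+a)| * |Real.sin (d*t+b)| := by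
  obtain ⟨ha1, ha2⟩ := abs_le.mp ha
  obtain ⟨hb1, hb2⟩ := abs_le.mp hb
  have h0a : 0 ≤ d*t + a := by nlinarith
  have h1a : d*t + a ≤ π := by nlinarith
  have h0b : 0 ≤ d*t + b := by nlinarith
  have h1b : d*t + b ≤ π := by nlinarith
  rw [abs_of_nonneg (aux_sin_nn h0a h1a), abs_of_nonneg (aux_sin_nn h0b h1b)]
  have := aux_pair_lower (D := d*t) (β := 2*α*t) (by nlinarith) (by nlinarith)
    (by nlinarith) (by nlinarith) ha hb hab
  rw [show d*t - 2*α*t = (d-2*α)*t by ring] at this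
  exact this

lemma sin_nn_arg {N : ℕ} {t c : ℝ} (ht : 0 < t) (hMt : (2*(N:ℝ)+1)*t = π)
    (hc0 : 0 ≤ c) (hcN : c ≤ 2*(N:ℝ)+1) : 0 ≤ Real.sin (c*t) :=
  aux_sin_nn (by positivity) (by nlinarith)

lemma sin_pos_arg {N : ℕ} {t c : ℝ} (ht : 0 < t) (hMt : (2*(N:ℝ)+1)*t = π)
    (hc0 : 0 < c) (hcN : c ≤ (N:ℝ) + 1/2) : 0 < Real.sin (c*t) := by
  apply Real.sin_pos_of_pos_of_lt_pi (by positivity)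
  nlinarith

/-- bound on the ratio of sine products appearing in the Lagrange basis
polynomials at α-perturbed nodes, in terms of the circular index distance. -/
theorem lagrange_residual_bound (α : ℝ) (hα0 : 0 ≤ α) (hα : α < 1/2)
    (N : ℕ) (hN : 0 < N)
    (x : ℤ → ℝ) (hx : PerturbedNodes N α x)
    (j k : ℤ) (hj : j ∈ Finset.Icc (-(N:ℤ)) (N:ℤ)) (hk : k ∈ Finset.Icc (-(N:ℤ)) (N:ℤ))
    (hkj : k ≠ j) :
    |(∏ m ∈ ((Finset.Icc (-(N:ℤ)) (N:ℤ)).erase j).erase k,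
        Real.sin (((x j + ((k : ℝ) - (j : ℝ)) * (2*π/(2*N+1))) - x m) / 2)) /
      (∏ m ∈ (Finset.Icc (-(N:ℤ)) (N:ℤ)).erase j, Real.sin ((x j - x m) / 2))| ≤
    (1 / Real.sin (((min |j - k| (2*(N:ℤ)+1 - |j - k|) : ℤ) : ℝ) * (2*π/(2*N+1)) / 2)) *
      ∏ m ∈ Finset.Icc 1 N,
        (Real.sin (((m : ℝ) * (2*π/(2*N+1)) + α * (2*π/(2*N+1))) / 2))^2 /
          (Real.sin (((m : ℝ) * (2*π/(2*N+1)) - 2 * α * (2*π/(2*N+1))) / 2) *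
            Real.sin ((m : ℝ) * (2*π/(2*N+1)) / 2)) := by
  have hπ := Real.pi_pos
  have hden : (0:ℝ) < 2*(N:ℝ)+1 := by positivity
  set t : ℝ := π / (2*(N:ℝ)+1) with htdef
  have ht : 0 < t := div_pos hπ hden
  have hMt : (2*(N:ℝ)+1)*t = π := by rw [htdef]; field_simp
  have h2t : 2*π/(2*(N:ℝ)+1) = 2*t := by rw [htdef]; ring
  have hN1 : (1:ℝ) ≤ (N:ℝ) := by exact_mod_cast hN
  -- perturbation bounds
  have hE : ∀ m ∈ Finset.Icc (-(N:ℤ)) (N:ℤ), |x m - (m:ℝ)*(2*t)| ≤ 2*α*t := by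
    intro m hm
    have h := hx m hm
    rw [h2t] at h
    rw [show 2*α*t = α*(2*t) by ring]
    exact h
  set v : ℤ → ℝ := fun m => ((x j - (j:ℝ)*(2*t)) - (x m - (m:ℝ)*(2*t)))/2 with hvdef
  have hv : ∀ m ∈ Finset.Icc (-(N:ℤ)) (N:ℤ), |v m| ≤ 2*α*t := by
    intro m hm
    have h1 := hE j hj
    have h2 := hE m hm
    rw [hvdef]
    simp only []
    rw [abs_div, abs_two]
    have := abs_sub (x j - (j:ℝ)*(2*t)) (x m - (m:ℝ)*(2*t))
    linarith
  have hvv : ∀ m ∈ Finset.Icc (-(N:ℤ)) (N:ℤ), ∀ m' ∈ Finset.Icc (-(N:ℤ)) (N:ℤ),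
      |v m - v m'| ≤ 2*α*t := by
    intro m hm m' hm'
    have h1 := hE m hm
    have h2 := hE m' hm'
    rw [hvdef]
    simp only []
    rw [show ((x j - (j:ℝ)*(2*t)) - (x m - (m:ℝ)*(2*t)))/2
        - ((x j - (j:ℝ)*(2*t)) - (x m' - (m':ℝ)*(2*t)))/2
        = ((x m' - (m':ℝ)*(2*t)) - (x m - (m:ℝ)*(2*t)))/2 by ring]
    rw [abs_div, abs_two]
    have := abs_sub (x m' - (m':ℝ)*(2*t)) (x m - (m:ℝ)*(2*t))
    linarith
  have hvj : v j = 0 := by rw [hvdef]; simp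
  -- the circular distance
  set D0 : ℤ := wrapI N (k - j) with hD0def
  have hD0ne : D0 ≠ 0 := by
    intro h0
    apply hkj
    apply eqS hk hj
    have := wrap_dvd N (k - j)
    rw [← hD0def, h0, sub_zero] at this
    exact this
  have hD0S : D0 ∈ (Finset.Icc (-(N:ℤ)) (N:ℤ)).erase 0 := by
    rw [Finset.mem_erase, hD0def]
    exact ⟨hD0def ▸ hD0ne, wrap_mem N (k-j)⟩
  set d0 : ℤ := |D0| with hd0def
  have hD0mem : -(N:ℤ) ≤ D0 ∧ D0 ≤ N := by
    rw [hD0def]; exact Finset.mem_Icc.mp (wrap_mem N (k-j))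
  have hd0mem : d0 ∈ Finset.Icc (1:ℤ) (N:ℤ) := by
    rw [Finset.mem_Icc, hd0def, Int.abs_eq_natAbs]
    omega
  have hd01 : (1:ℝ) ≤ (d0:ℝ) := by exact_mod_cast (Finset.mem_Icc.mp hd0mem).1
  have hd0N : (d0:ℝ) ≤ (N:ℝ) := by exact_mod_cast (Finset.mem_Icc.mp hd0mem).2
  -- numerator rewrite
  set A : ℤ → ℝ := fun w => |Real.sin ((w:ℝ)*t + v (wrapI N (k - w)))| with hAdef
  set B : ℤ → ℝ := fun w => |Real.sin ((w:ℝ)*t + v (wrapI N (j - w)))| with hBdef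
  have hNum : |∏ m ∈ ((Finset.Icc (-(N:ℤ)) (N:ℤ)).erase j).erase k,
        Real.sin (((x j + ((k : ℝ) - (j : ℝ)) * (2*π/(2*(N:ℝ)+1))) - x m) / 2)|
      = ∏ w ∈ ((Finset.Icc (-(N:ℤ)) (N:ℤ)).erase 0).erase D0, A w := by
    rw [Finset.abs_prod]
    rw [prod_reindex2
      (f := fun m => |Real.sin (((x j + ((k : ℝ) - (j : ℝ)) * (2*π/(2*(N:ℝ)+1))) - x m) / 2)|)
      hk hj]
    apply Finset.prod_congr rfl
    intro w hw
    have hwS : w ∈ Finset.Icc (-(N:ℤ)) (N:ℤ) :=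
      Finset.mem_of_mem_erase (Finset.mem_of_mem_erase hw)
    obtain ⟨q, hq⟩ := wrap_dvd N (k - wrapI N (k - w))
    rw [wrap_invol hk hwS] at hq
    have hqr : ((k:ℝ) - ((wrapI N (k - w) : ℤ):ℝ)) - (w:ℝ) = (2*(N:ℝ)+1)*(q:ℝ) := by
      exact_mod_cast hq
    have harg : ((x j + ((k : ℝ) - (j : ℝ)) * (2*π/(2*(N:ℝ)+1))) - x (wrapI N (k - w))) / 2
        = ((w:ℝ)*t + v (wrapI N (k - w))) + (q:ℝ)*π := by
      rw [h2t, hvdef]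
      simp only []
      rw [← hMt]
      linear_combination (t/1) * hqr
    rw [harg, abs_sin_period, hAdef]
  -- denominator rewrite
  have hDen : |∏ m ∈ (Finset.Icc (-(N:ℤ)) (N:ℤ)).erase j, Real.sin ((x j - x m) / 2)|
      = ∏ w ∈ (Finset.Icc (-(N:ℤ)) (N:ℤ)).erase 0, B w := by
    rw [Finset.abs_prod]
    rw [prod_reindex (f := fun m => |Real.sin ((x j - x m) / 2)|) hj]
    apply Finset.prod_congr rfl
    intro w hw
    have hwS : w ∈ Finset.Icc (-(N:ℤ)) (N:ℤ) := Finset.mem_of_mem_erase hw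
    obtain ⟨q, hq⟩ := wrap_dvd N (j - wrapI N (j - w))
    rw [wrap_invol hj hwS] at hq
    have hqr : ((j:ℝ) - ((wrapI N (j - w) : ℤ):ℝ)) - (w:ℝ) = (2*(N:ℝ)+1)*(q:ℝ) := by
      exact_mod_cast hq
    have harg : (x j - x (wrapI N (j - w))) / 2
        = ((w:ℝ)*t + v (wrapI N (j - w))) + (q:ℝ)*π := by
      rw [hvdef]
      simp only []
      rw [← hMt]
      linear_combination (t/1) * hqr
    rw [harg, abs_sin_period, hBdef]
  -- value of A at D0
  have hsind0 : 0 < Real.sin ((d0:ℝ)*t) := sin_pos_arg ht hMt (by linarith) (by linarith)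
  have habsz : ∀ z : ℤ, |Real.sin ((z:ℝ)*t)| = |Real.sin (((|z|:ℤ):ℝ)*t)| := by
    intro z
    rcases abs_cases z with ⟨he,_⟩|⟨he,_⟩
    · rw [he]
    · rw [he]; push_cast
      rw [show (-(z:ℝ))*t = -((z:ℝ)*t) by ring, Real.sin_neg, abs_neg]
  have hAD0 : A D0 = Real.sin ((d0:ℝ)*t) := by
    rw [hAdef]
    simp only []
    have hkD0 : wrapI N (k - D0) = j := by rw [hD0def]; exact wrap_invol hk hj
    rw [hkD0, hvj, add_zero, habsz D0, ← hd0def]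
    exact abs_of_nonneg (sin_nn_arg ht hMt (by linarith) (by linarith))
  -- target products
  set Pstar : ℝ := ∏ d ∈ Finset.Icc (1:ℤ) (N:ℤ), Real.sin (((d:ℝ)+α)*t)^2 with hPdef
  set Dstar : ℝ := ∏ d ∈ Finset.Icc (1:ℤ) (N:ℤ),
      (Real.sin (((d:ℝ)-2*α)*t) * Real.sin ((d:ℝ)*t)) with hDdef
  have hDstarpos : 0 < Dstar := by
    rw [hDdef]
    apply Finset.prod_pos
    intro d hd
    obtain ⟨hd1, hd2⟩ := Finset.mem_Icc.mp hd
    have hd1R : (1:ℝ) ≤ (d:ℝ) := by exact_mod_cast hd1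
    have hd2R : (d:ℝ) ≤ (N:ℝ) := by exact_mod_cast hd2
    exact mul_pos (sin_pos_arg ht hMt (by linarith) (by linarith))
      (sin_pos_arg ht hMt (by linarith) (by linarith))
  have hPpos : 0 ≤ Pstar := by
    rw [hPdef]; exact Finset.prod_nonneg fun d _ => sq_nonneg _
  -- numerator bound
  have hNumB : ∏ w ∈ (Finset.Icc (-(N:ℤ)) (N:ℤ)).erase 0, A w ≤ Pstar := by
    rw [pair_split, hPdef]
    apply Finset.prod_le_prod (fun d _ => mul_nonneg (abs_nonneg _) (abs_nonneg _))
    intro d hd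
    obtain ⟨hd1, hd2⟩ := Finset.mem_Icc.mp hd
    have hd1R : (1:ℝ) ≤ (d:ℝ) := by exact_mod_cast hd1
    have hd2R : (d:ℝ) ≤ (N:ℝ) := by exact_mod_cast hd2
    rw [hAdef]
    simp only []
    rw [show ((-d:ℤ):ℝ)*t + v (wrapI N (k - -d))
        = -((d:ℝ)*t + -(v (wrapI N (k - -d)))) by push_cast; ring,
      Real.sin_neg, abs_neg]
    apply pairA_bound ht hα0 hα hMt hd1R hd2R
    · exact hv _ (wrap_mem N _)
    · rw [abs_neg]; exact hv _ (wrap_mem N _)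
    · rw [show v (wrapI N (k - d)) + -(v (wrapI N (k - -d)))
          = v (wrapI N (k - d)) - v (wrapI N (k - -d)) by ring]
      exact hvv _ (wrap_mem N _) _ (wrap_mem N _)
  have hNumBound : (∏ w ∈ ((Finset.Icc (-(N:ℤ)) (N:ℤ)).erase 0).erase D0, A w)
      * Real.sin ((d0:ℝ)*t) ≤ Pstar := by
    calc (∏ w ∈ ((Finset.Icc (-(N:ℤ)) (N:ℤ)).erase 0).erase D0, A w) * Real.sin ((d0:ℝ)*t)
        = A D0 * ∏ w ∈ ((Finset.Icc (-(N:ℤ)) (N:ℤ)).erase 0).erase D0, A w := by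
          rw [hAD0]; ring
      _ = ∏ w ∈ (Finset.Icc (-(N:ℤ)) (N:ℤ)).erase 0, A w :=
          Finset.mul_prod_erase _ _ hD0S
      _ ≤ Pstar := hNumB
  -- denominator bound
  have hDenB : Dstar ≤ ∏ w ∈ (Finset.Icc (-(N:ℤ)) (N:ℤ)).erase 0, B w := by
    rw [pair_split, hDdef]
    apply Finset.prod_le_prod
    · intro d hd
      obtain ⟨hd1, hd2⟩ := Finset.mem_Icc.mp hd
      have hd1R : (1:ℝ) ≤ (d:ℝ) := by exact_mod_cast hd1
      have hd2R : (d:ℝ) ≤ (N:ℝ) := by exact_mod_cast hd2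
      exact mul_nonneg
        (sin_nn_arg ht hMt (by linarith) (by linarith))
        (sin_nn_arg ht hMt (by linarith) (by linarith))
    intro d hd
    obtain ⟨hd1, hd2⟩ := Finset.mem_Icc.mp hd
    have hd1R : (1:ℝ) ≤ (d:ℝ) := by exact_mod_cast hd1
    have hd2R : (d:ℝ) ≤ (N:ℝ) := by exact_mod_cast hd2
    rw [hBdef]
    simp only []
    rw [show ((-d:ℤ):ℝ)*t + v (wrapI N (j - -d))
        = -((d:ℝ)*t + -(v (wrapI N (j - -d)))) by push_cast; ring,
      Real.sin_neg, abs_neg]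
    apply pairB_bound ht hα0 hα hMt hd1R hd2R
    · exact hv _ (wrap_mem N _)
    · rw [abs_neg]; exact hv _ (wrap_mem N _)
    · rw [show v (wrapI N (j - d)) + -(v (wrapI N (j - -d)))
          = v (wrapI N (j - d)) - v (wrapI N (j - -d)) by ring]
      exact hvv _ (wrap_mem N _) _ (wrap_mem N _)
  -- rewrite the goal
  have hminZ : min |j - k| (2*(N:ℤ)+1 - |j - k|) = d0 := by
    rw [dmin_eq hj hk, ← hD0def, ← hd0def]
  rw [hminZ, abs_div, hNum, hDen]
  rw [show ((d0:ℤ):ℝ) * (2*π/(2*(N:ℝ)+1)) / 2 = ((d0:ℤ):ℝ)*t by rw [h2t]; ring]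
  have hprod : (∏ m ∈ Finset.Icc 1 N,
        (Real.sin (((m : ℝ) * (2*π/(2*(N:ℝ)+1)) + α * (2*π/(2*(N:ℝ)+1))) / 2))^2 /
          (Real.sin (((m : ℝ) * (2*π/(2*(N:ℝ)+1)) - 2 * α * (2*π/(2*(N:ℝ)+1))) / 2) *
            Real.sin ((m : ℝ) * (2*π/(2*(N:ℝ)+1)) / 2)))
      = Pstar / Dstar := by
    rw [hPdef, hDdef, ← Finset.prod_div_distrib]
    rw [prod_nat_int (fun d : ℤ => Real.sin (((d:ℝ)+α)*t)^2 /
      (Real.sin (((d:ℝ)-2*α)*t) * Real.sin ((d:ℝ)*t))) N]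
    apply Finset.prod_congr rfl
    intro m _
    rw [h2t]
    rw [show ((m:ℝ)*(2*t) + α*(2*t))/2 = (((m:ℕ):ℤ):ℝ)*t + α*t by push_cast; ring]
    rw [show ((m:ℝ)*(2*t) - 2*α*(2*t))/2 = (((m:ℕ):ℤ):ℝ)*t - 2*α*t by push_cast; ring]
    rw [show (m:ℝ)*(2*t)/2 = (((m:ℕ):ℤ):ℝ)*t by push_cast; ring]
    rw [show ((((m:ℕ):ℤ):ℝ)+α)*t = (((m:ℕ):ℤ):ℝ)*t + α*t by ring]
    rw [show ((((m:ℕ):ℤ):ℝ)-2*α)*t = (((m:ℕ):ℤ):ℝ)*t - 2*α*t by ring]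
  rw [hprod]
  have hDenApos : (0:ℝ) < ∏ w ∈ (Finset.Icc (-(N:ℤ)) (N:ℤ)).erase 0, B w :=
    lt_of_lt_of_le hDstarpos hDenB
  rw [show 1/Real.sin (((d0:ℤ):ℝ)*t) * (Pstar/Dstar)
      = Pstar / (Real.sin (((d0:ℤ):ℝ)*t) * Dstar) by ring]
  rw [div_le_div_iff₀ hDenApos (mul_pos hsind0 hDstarpos)]
  calc (∏ w ∈ ((Finset.Icc (-(N:ℤ)) (N:ℤ)).erase 0).erase D0, A w)
        * (Real.sin (((d0:ℤ):ℝ)*t) * Dstar)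
      = ((∏ w ∈ ((Finset.Icc (-(N:ℤ)) (N:ℤ)).erase 0).erase D0, A w)
        * Real.sin (((d0:ℤ):ℝ)*t)) * Dstar := by ring
    _ ≤ Pstar * ∏ w ∈ (Finset.Icc (-(N:ℤ)) (N:ℤ)).erase 0, B w :=
        mul_le_mul hNumBound hDenB (le_of_lt hDstarpos) hPpos
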